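/- For the circle of diameter [A₂O₁'] arising as the polar dual of the ellipse focused at O and O₂ passing through A₂ (w.r.t. inversion in (O, R₁+R₂)), and the corresponding circle of diameter [A₁O₂'], their external common tangent meets the center line at the external similitude center H, and the projection P of O onto this common tangent satisfies OP = (R₁+R₂)(R₁²+R₁R₂+R₂²)/(R₁²+R₂²). -/

import Mathlib

open scoped RealInnerProductSpace

/-- **The common external tangent of the two reciprocal circles.**
Arbelos: `A₁ = (0,0)`, `A₂ = (2R₁+2R₂,0)`, `O = (R₁+R₂,0)`.  The inverses of
`O₁ = (R₁,0)` and `O₂ = (2R₁+R₂,0)` in the circle `(O, R₁+R₂)` are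
`O₁' = (R₁+R₂) - (R₁+R₂)²/R₂` and `O₂' = (R₁+R₂) + (R₁+R₂)²/R₁` on the x-axis.
Consider the circle `Γ₁` of diameter `[A₁O₂']` (center `c₁`, radius `ρ₁`) and `Γ₂` of
diameter `[A₂O₁']` (center `c₂`, radius `ρ₂`), both diameters on the x-axis, and a common
external tangent line `t = {Q : ⟪Q, n⟫ = c}` (unit normal `n`, centers on the same side:
`⟪c₁, n⟫ - c = ρ₁` and `⟪c₂, n⟫ - c = ρ₂`).  If `P` is the orthogonal projection of `O`
onto `t`, then `OP = (R₁+R₂)(R₁²+R₁R₂+R₂²)/(R₁²+R₂²)`. -/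
theorem common_tangent_projection_distance (R₁ R₂ c : ℝ) (hR₁ : 0 < R₁) (hR₂ : 0 < R₂)
    (A₁ A₂ O O₁' O₂' c₁ c₂ n P : EuclideanSpace ℝ (Fin 2))
    (hA₁ : A₁ = !₂[0, 0]) (hA₂ : A₂ = !₂[2 * R₁ + 2 * R₂, 0]) (hO : O = !₂[R₁ + R₂, 0])
    (hO₁' : O₁' = !₂[(R₁ + R₂) - (R₁ + R₂) ^ 2 / R₂, 0])
    (hO₂' : O₂' = !₂[(R₁ + R₂) + (R₁ + R₂) ^ 2 / R₁, 0])
    (hc₁ : c₁ = midpoint ℝ A₁ O₂') (hc₂ : c₂ = midpoint ℝ A₂ O₁')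
    (ρ₁ ρ₂ : ℝ) (hρ₁ : ρ₁ = dist A₁ O₂' / 2) (hρ₂ : ρ₂ = dist A₂ O₁' / 2)
    (hn : ‖n‖ = 1)
    (htang₁ : ⟪c₁, n⟫ - c = ρ₁)    -- `t` tangent to `Γ₁`, center on the positive side
    (htang₂ : ⟪c₂, n⟫ - c = ρ₂)    -- `t` tangent to `Γ₂`, same side (external tangent)
    (hP : P = O - (⟪O, n⟫ - c) • n) :
    dist O P = (R₁ + R₂) * (R₁ ^ 2 + R₁ * R₂ + R₂ ^ 2) / (R₁ ^ 2 + R₂ ^ 2) := by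
  have hS : (0:ℝ) < R₁ + R₂ := by linarith
  obtain ⟨u, hu_def, hu, hupos⟩ :
      ∃ u : ℝ, (R₁ + R₂) ^ 2 / R₁ = u ∧ R₁ * u = (R₁ + R₂) ^ 2 ∧ 0 < u :=
    ⟨_, rfl, mul_div_cancel₀ _ hR₁.ne', by positivity⟩
  obtain ⟨v, hv_def, hv, hvpos⟩ :
      ∃ v : ℝ, (R₁ + R₂) ^ 2 / R₂ = v ∧ R₂ * v = (R₁ + R₂) ^ 2 ∧ 0 < v :=
    ⟨_, rfl, mul_div_cancel₀ _ hR₂.ne', by positivity⟩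
  rw [hu_def] at hO₂'
  rw [hv_def] at hO₁'
  -- inner products in coordinates
  have hiA₁ : ⟪A₁, n⟫ = 0 := by
    rw [hA₁]; simp [PiLp.inner_apply, Fin.sum_univ_two]
  have hiA₂ : ⟪A₂, n⟫ = (2 * R₁ + 2 * R₂) * n 0 := by
    rw [hA₂]; simp [PiLp.inner_apply, Fin.sum_univ_two, mul_comm]
  have hiO : ⟪O, n⟫ = (R₁ + R₂) * n 0 := by
    rw [hO]; simp [PiLp.inner_apply, Fin.sum_univ_two, mul_comm]
  have hiO₁' : ⟪O₁', n⟫ = ((R₁ + R₂) - v) * n 0 := by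
    rw [hO₁']; simp [PiLp.inner_apply, Fin.sum_univ_two, mul_comm]
  have hiO₂' : ⟪O₂', n⟫ = ((R₁ + R₂) + u) * n 0 := by
    rw [hO₂']; simp [PiLp.inner_apply, Fin.sum_univ_two, mul_comm]
  -- radii
  have hρ₁' : ρ₁ = ((R₁ + R₂) + u) / 2 := by
    rw [hρ₁, hA₁, hO₂', EuclideanSpace.dist_eq]
    simp only [Fin.sum_univ_two, Matrix.cons_val_zero, Matrix.cons_val_one, Matrix.head_cons,
      Real.dist_eq]
    rw [zero_sub, abs_neg, abs_of_pos (by positivity), sub_self, abs_zero]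
    rw [show ((0:ℝ)) ^ 2 = 0 by norm_num, add_zero, Real.sqrt_sq (by positivity)]
  have hρ₂' : ρ₂ = ((R₁ + R₂) + v) / 2 := by
    rw [hρ₂, hA₂, hO₁', EuclideanSpace.dist_eq]
    simp only [Fin.sum_univ_two, Matrix.cons_val_zero, Matrix.cons_val_one, Matrix.head_cons,
      Real.dist_eq]
    rw [show 2 * R₁ + 2 * R₂ - ((R₁ + R₂) - v) = (R₁ + R₂) + v by ring,
      abs_of_pos (by positivity), sub_self, abs_zero,
      show ((0:ℝ)) ^ 2 = 0 by norm_num, add_zero, Real.sqrt_sq (by positivity)]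
  -- tangency equations in coordinates
  have h2inv : (⅟2 : ℝ) = 1 / 2 := by rw [invOf_eq_inv]; norm_num
  have ht₁ : (1 / 2 : ℝ) * (0 + ((R₁ + R₂) + u) * n 0) - c = ((R₁ + R₂) + u) / 2 := by
    rw [hc₁, midpoint_eq_smul_add, real_inner_smul_left, inner_add_left, hiA₁, hiO₂',
      h2inv, hρ₁'] at htang₁
    exact htang₁
  have ht₂ : (1 / 2 : ℝ) * ((2 * R₁ + 2 * R₂) * n 0 + ((R₁ + R₂) - v) * n 0) - c
      = ((R₁ + R₂) + v) / 2 := by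
    rw [hc₂, midpoint_eq_smul_add, real_inner_smul_left, inner_add_left, hiA₂, hiO₁',
      h2inv, hρ₂'] at htang₂
    exact htang₂
  have h12 : (0:ℝ) < R₁ ^ 2 + R₂ ^ 2 := by positivity
  have hval : (R₁ + R₂) * n 0 - c
      = (R₁ + R₂) * (R₁ ^ 2 + R₁ * R₂ + R₂ ^ 2) / (R₁ ^ 2 + R₂ ^ 2) := by
    rw [eq_div_iff h12.ne']
    linear_combination R₁ ^ 2 * ht₁ + R₂ ^ 2 * ht₂ + (R₁ / 2 - R₁ * n 0 / 2) * hu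
      + (R₂ / 2 + R₂ * n 0 / 2) * hv
  have hd : dist O P = |(R₁ + R₂) * n 0 - c| := by
    rw [hP, dist_eq_norm]
    simp only [sub_sub_cancel, norm_smul, hn, mul_one, Real.norm_eq_abs]
    rw [hiO]
  rw [hd, hval, abs_of_pos (by positivity)]
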